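/- A 2-regular graph on n vertices admits an orientation with skew energy n√2 if and only if n is a multiple of 4 and the graph is a disjoint union of n/4 copies of the cycle C₄. -/

import Mathlib

open Matrix BigOperators

/-- The skew energy of a real matrix `S`: the sum of its singular values, i.e. the
square roots of the eigenvalues of `Sᵀ * S` (which equals `Sᴴ * S` over `ℝ`). -/
noncomputable def skewEnergy {α : Type*} [Fintype α] [DecidableEq α]
    (S : Matrix α α ℝ) : ℝ :=
  ∑ i, Real.sqrt ((show (Sᵀ * S).IsHermitian by
    simpa using Matrix.isHermitian_conjTranspose_mul_self S).eigenvalues i)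

/-- `S` is the skew-adjacency matrix of some orientation of the simple graph `G`:
`S` is skew-symmetric with entries in `{0, ±1}` and `|S i j| = 1` iff `ij` is an edge. -/
def IsSkewAdj {α : Type*} (G : SimpleGraph α) (S : Matrix α α ℝ) : Prop :=
  Sᵀ = -S ∧ ∀ i j, (G.Adj i j → (S i j = 1 ∨ S i j = -1)) ∧ (¬ G.Adj i j → S i j = 0)

/-- The disjoint union of `k` copies of the cycle `C₄`. -/
def cycleUnion (k : ℕ) : SimpleGraph (Fin k × ZMod 4) where
  Adj x y := x.1 = y.1 ∧ (x.2 = y.2 + 1 ∨ y.2 = x.2 + 1)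
  symm := ⟨by rintro ⟨a, i⟩ ⟨b, j⟩ ⟨h1, h2⟩; exact ⟨h1.symm, h2.symm⟩⟩
  loopless := ⟨by rintro ⟨a, i⟩ ⟨-, h | h⟩ <;> simp at h <;> exact absurd h (by decide)⟩


structure QuadSetup {n : ℕ} (G : SimpleGraph (Fin n)) [DecidableRel G.Adj]
    (a b p : Fin n → Fin n) : Prop where
  H1 : ∀ v, a v ≠ b v
  H2 : ∀ v, G.neighborFinset v = {a v, b v}
  H3a : ∀ v, G.Adj (a v) (p v)
  H3b : ∀ v, G.Adj (b v) (p v)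
  H4 : ∀ v, p v ≠ v

namespace QuadSetup
variable {n : ℕ} {G : SimpleGraph (Fin n)} [DecidableRel G.Adj] {a b p : Fin n → Fin n}
  (h : QuadSetup G a b p)
include h

lemma adj_iff (v u : Fin n) : G.Adj v u ↔ (u = a v ∨ u = b v) := by
  rw [← SimpleGraph.mem_neighborFinset, h.H2]; simp

lemma adj_a (v : Fin n) : G.Adj v (a v) := (h.adj_iff v _).2 (Or.inl rfl)
lemma adj_b (v : Fin n) : G.Adj v (b v) := (h.adj_iff v _).2 (Or.inr rfl)

lemma ne_av (v : Fin n) : a v ≠ v := (h.adj_a v).ne'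
lemma ne_bv (v : Fin n) : b v ≠ v := (h.adj_b v).ne'
lemma ne_pa (v : Fin n) : p v ≠ a v := (h.H3a v).ne'
lemma ne_pb (v : Fin n) : p v ≠ b v := (h.H3b v).ne'

lemma notAdj_vp (v : Fin n) : ¬ G.Adj v (p v) := by
  rw [h.adj_iff]; push_neg; exact ⟨h.ne_pa v, h.ne_pb v⟩

lemma card_nb (v : Fin n) : (G.neighborFinset v).card = 2 := by
  rw [h.H2, Finset.card_pair (h.H1 v)]

lemma nb_a (v : Fin n) : G.neighborFinset (a v) = {v, p v} := by
  refine (Finset.eq_of_subset_of_card_le ?_ ?_).symm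
  · rw [Finset.insert_subset_iff, Finset.singleton_subset_iff]
    exact ⟨(SimpleGraph.mem_neighborFinset _ _ _).2 (h.adj_a v).symm,
      (SimpleGraph.mem_neighborFinset _ _ _).2 (h.H3a v)⟩
  · rw [h.card_nb, Finset.card_pair ((h.H4 v).symm)]

lemma nb_b (v : Fin n) : G.neighborFinset (b v) = {v, p v} := by
  refine (Finset.eq_of_subset_of_card_le ?_ ?_).symm
  · rw [Finset.insert_subset_iff, Finset.singleton_subset_iff]
    exact ⟨(SimpleGraph.mem_neighborFinset _ _ _).2 (h.adj_b v).symm,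
      (SimpleGraph.mem_neighborFinset _ _ _).2 (h.H3b v)⟩
  · rw [h.card_nb, Finset.card_pair ((h.H4 v).symm)]

lemma nb_p (v : Fin n) : G.neighborFinset (p v) = {a v, b v} := by
  refine (Finset.eq_of_subset_of_card_le ?_ ?_).symm
  · rw [Finset.insert_subset_iff, Finset.singleton_subset_iff]
    exact ⟨(SimpleGraph.mem_neighborFinset _ _ _).2 (h.H3a v).symm,
      (SimpleGraph.mem_neighborFinset _ _ _).2 (h.H3b v).symm⟩
  · rw [h.card_nb, Finset.card_pair (h.H1 v)]

lemma notAdj_ab (v : Fin n) : ¬ G.Adj (a v) (b v) := by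
  rw [← SimpleGraph.mem_neighborFinset, h.nb_a]
  simp [(h.ne_bv v), (h.ne_pb v).symm]

-- pair analysis for neighbors of a v
lemma pair_a (v : Fin n) :
    (a (a v) = v ∧ b (a v) = p v) ∨ (a (a v) = p v ∧ b (a v) = v) := by
  have h1 := h.nb_a v
  rw [h.H2] at h1
  have ha : a (a v) = v ∨ a (a v) = p v := by
    have : a (a v) ∈ ({v, p v} : Finset (Fin n)) := h1 ▸ (by simp)
    simpa using this
  have hb : b (a v) = v ∨ b (a v) = p v := by
    have : b (a v) ∈ ({v, p v} : Finset (Fin n)) := h1 ▸ (by simp)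
    simpa using this
  have hne := h.H1 (a v)
  rcases ha with ha | ha <;> rcases hb with hb | hb
  · exact absurd (ha.trans hb.symm) hne
  · exact Or.inl ⟨ha, hb⟩
  · exact Or.inr ⟨ha, hb⟩
  · exact absurd (ha.trans hb.symm) hne

lemma pair_b (v : Fin n) :
    (a (b v) = v ∧ b (b v) = p v) ∨ (a (b v) = p v ∧ b (b v) = v) := by
  have h1 := h.nb_b v
  rw [h.H2] at h1
  have ha : a (b v) = v ∨ a (b v) = p v := by
    have : a (b v) ∈ ({v, p v} : Finset (Fin n)) := h1 ▸ (by simp)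
    simpa using this
  have hb : b (b v) = v ∨ b (b v) = p v := by
    have : b (b v) ∈ ({v, p v} : Finset (Fin n)) := h1 ▸ (by simp)
    simpa using this
  have hne := h.H1 (b v)
  rcases ha with ha | ha <;> rcases hb with hb | hb
  · exact absurd (ha.trans hb.symm) hne
  · exact Or.inl ⟨ha, hb⟩
  · exact Or.inr ⟨ha, hb⟩
  · exact absurd (ha.trans hb.symm) hne

lemma pair_p (v : Fin n) :
    (a (p v) = a v ∧ b (p v) = b v) ∨ (a (p v) = b v ∧ b (p v) = a v) := by
  have h1 := h.nb_p v
  rw [h.H2] at h1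
  have ha : a (p v) = a v ∨ a (p v) = b v := by
    have : a (p v) ∈ ({a v, b v} : Finset (Fin n)) := h1 ▸ (by simp)
    simpa using this
  have hb : b (p v) = a v ∨ b (p v) = b v := by
    have : b (p v) ∈ ({a v, b v} : Finset (Fin n)) := h1 ▸ (by simp)
    simpa using this
  have hne := h.H1 (p v)
  rcases ha with ha | ha <;> rcases hb with hb | hb
  · exact absurd (ha.trans hb.symm) hne
  · exact Or.inl ⟨ha, hb⟩
  · exact Or.inr ⟨ha, hb⟩
  · exact absurd (ha.trans hb.symm) hne

lemma p_a (v : Fin n) : p (a v) = b v := by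
  -- p (a v) is adjacent to a (a v) and b (a v), which are v and p v in some order,
  -- hence adjacent to v, hence in {a v, b v}; and p (a v) ≠ a v
  have hadjv : G.Adj v (p (a v)) := by
    rcases h.pair_a v with ⟨h1, _⟩ | ⟨_, h2⟩
    · have := h.H3a (a v); rwa [h1] at this
    · have := h.H3b (a v); rwa [h2] at this
  rcases (h.adj_iff v _).1 hadjv with h' | h'
  · exact absurd h' (h.H4 (a v))
  · exact h'

lemma p_b (v : Fin n) : p (b v) = a v := by
  have hadjv : G.Adj v (p (b v)) := by
    rcases h.pair_b v with ⟨h1, _⟩ | ⟨_, h2⟩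
    · have := h.H3a (b v); rwa [h1] at this
    · have := h.H3b (b v); rwa [h2] at this
  rcases (h.adj_iff v _).1 hadjv with h' | h'
  · exact h'
  · exact absurd h' (h.H4 (b v))

lemma p_p (v : Fin n) : p (p v) = v := by
  have hadjv : G.Adj (a v) (p (p v)) := by
    rcases h.pair_p v with ⟨h1, _⟩ | ⟨_, h2⟩
    · have := h.H3a (p v); rwa [h1] at this
    · have := h.H3b (p v); rwa [h2] at this
  have : p (p v) ∈ G.neighborFinset (a v) := (SimpleGraph.mem_neighborFinset _ _ _).2 hadjv
  rw [h.nb_a] at this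
  simp only [Finset.mem_insert, Finset.mem_singleton] at this
  rcases this with h' | h'
  · exact h'
  · exact absurd h' (h.H4 (p v))

/-- the quad of `v` -/
def quad (a b p : Fin n → Fin n) (v : Fin n) : Finset (Fin n) := {v, a v, p v, b v}

omit h in
lemma mem_quad_iff (u v : Fin n) :
    u ∈ quad a b p v ↔ u = v ∨ u = a v ∨ u = p v ∨ u = b v := by
  simp [quad]

lemma quad_eq (u v : Fin n) (hu : u ∈ quad a b p v) : quad a b p u = quad a b p v := by
  rw [mem_quad_iff] at hu
  rcases hu with rfl | rfl | rfl | rfl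
  · rfl
  · rcases h.pair_a v with ⟨h1, h2⟩ | ⟨h1, h2⟩ <;>
      · unfold quad
        rw [h1, h2, h.p_a]
        ext x; simp; tauto
  · rcases h.pair_p v with ⟨h1, h2⟩ | ⟨h1, h2⟩ <;>
      · unfold quad
        rw [h1, h2, h.p_p]
        ext x; simp; tauto
  · rcases h.pair_b v with ⟨h1, h2⟩ | ⟨h1, h2⟩ <;>
      · unfold quad
        rw [h1, h2, h.p_b]
        ext x; simp; tauto

end QuadSetup

section PosQ
variable {n : ℕ} {G : SimpleGraph (Fin n)} [DecidableRel G.Adj] {a b p : Fin n → Fin n}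

/-- position of `u` in the quad of `r` -/
def posQ (a p : Fin n → Fin n) (r u : Fin n) : ZMod 4 :=
  if u = r then 0 else if u = a r then 1 else if u = p r then 2 else 3

namespace QuadSetup
variable (h : QuadSetup G a b p)
include h

omit h in
lemma posQ_r (r : Fin n) : posQ a p r r = 0 := by simp [posQ]

lemma posQ_a (r : Fin n) : posQ a p r (a r) = 1 := by simp [posQ, h.ne_av r]

lemma posQ_p (r : Fin n) : posQ a p r (p r) = 2 := by
  simp [posQ, h.H4 r, h.ne_pa r]

lemma posQ_b (r : Fin n) : posQ a p r (b r) = 3 := by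
  simp [posQ, h.ne_bv r, Ne.symm (h.H1 r), (h.ne_pb r).symm]

lemma adj_quad (r u v : Fin n) (hu : u ∈ quad a b p r) (hv : v ∈ quad a b p r) :
    G.Adj u v ↔ (posQ a p r u = posQ a p r v + 1 ∨ posQ a p r v = posQ a p r u + 1) := by
  rw [mem_quad_iff] at hu hv
  rcases hu with rfl | rfl | rfl | rfl <;> rcases hv with rfl | rfl | rfl | rfl <;>
    simp only [posQ_r, h.posQ_a, h.posQ_p, h.posQ_b]
  · exact iff_of_false (G.loopless.irrefl _) (by decide)
  · exact iff_of_true (h.adj_a _) (by decide)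
  · exact iff_of_false (h.notAdj_vp _) (by decide)
  · exact iff_of_true (h.adj_b _) (by decide)
  · exact iff_of_true (h.adj_a _).symm (by decide)
  · exact iff_of_false (G.loopless.irrefl _) (by decide)
  · exact iff_of_true (h.H3a _) (by decide)
  · exact iff_of_false (h.notAdj_ab _) (by decide)
  · exact iff_of_false (fun h' => h.notAdj_vp _ h'.symm) (by decide)
  · exact iff_of_true (h.H3a _).symm (by decide)
  · exact iff_of_false (G.loopless.irrefl _) (by decide)
  · exact iff_of_true (h.H3b _).symm (by decide)
  · exact iff_of_true (h.adj_b _).symm (by decide)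
  · exact iff_of_false (fun h' => h.notAdj_ab _ h'.symm) (by decide)
  · exact iff_of_true (h.H3b _) (by decide)
  · exact iff_of_false (G.loopless.irrefl _) (by decide)

/-- the setoid whose classes are the quads -/
def qst (h : QuadSetup G a b p) : Setoid (Fin n) where
  r u v := u ∈ quad a b p v
  iseqv := by
    refine ⟨fun v => ?_, fun {u v} huv => ?_, fun {x y z} hxy hyz => ?_⟩
    · rw [mem_quad_iff]; exact Or.inl rfl
    · rw [h.quad_eq u v huv, mem_quad_iff]; exact Or.inl rfl
    · rw [← h.quad_eq y z hyz]; exact hxy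

set_option maxHeartbeats 1000000 in
set_option synthInstance.maxHeartbeats 200000 in
lemma conclusion : ∃ k, n = 4 * k ∧ Nonempty (G ≃g cycleUnion k) := by
  classical
  letI st : Setoid (Fin n) := h.qst
  letI : DecidableRel ((· ≈ ·) : Fin n → Fin n → Prop) :=
    fun u v => Classical.dec _
  haveI : Fintype (Quotient st) := Quotient.fintype st
  set k := Fintype.card (Quotient st) with hk
  let rep : Quotient st → Fin n := Quotient.out
  let pos : Fin n → ZMod 4 := fun u => posQ a p (rep ⟦u⟧) u
  have hmemout : ∀ u : Fin n, u ∈ quad a b p (rep ⟦u⟧) := by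
    intro u
    have h1 : rep ⟦u⟧ ∈ quad a b p u := Quotient.mk_out u
    rw [h.quad_eq _ u h1, mem_quad_iff]; exact Or.inl rfl
  have hmk : ∀ (x r : Fin n), x ∈ quad a b p r → (⟦x⟧ : Quotient st) = ⟦r⟧ :=
    fun x r hx => Quotient.sound hx
  -- the bijection
  let φ : Fin n → Quotient st × ZMod 4 := fun u => (⟦u⟧, pos u)
  have hinj : Function.Injective φ := by
    intro u v huv
    have hQ : (⟦u⟧ : Quotient st) = ⟦v⟧ := congrArg Prod.fst huv
    have hpos : pos u = pos v := congrArg Prod.snd huv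
    have hu := hmemout u
    have hv : v ∈ quad a b p (rep ⟦u⟧) := by rw [hQ]; exact hmemout v
    have hpos' : posQ a p (rep ⟦u⟧) u = posQ a p (rep ⟦u⟧) v := by
      have : pos v = posQ a p (rep ⟦u⟧) v := by show posQ a p (rep ⟦v⟧) v = _; rw [hQ]
      rw [← this, ← hpos]
    obtain ⟨r, hr⟩ : ∃ r, rep ⟦u⟧ = r := ⟨_, rfl⟩
    rw [hr] at hu hv hpos'
    clear hQ hpos huv hr
    rw [mem_quad_iff] at hu hv
    rcases hu with rfl | rfl | rfl | rfl <;> rcases hv with rfl | rfl | rfl | rfl <;>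
        first
        | rfl
        | (rw [posQ_r, h.posQ_a] at hpos' <;> exact absurd hpos' (by decide))
        | (rw [posQ_r, h.posQ_p] at hpos' <;> exact absurd hpos' (by decide))
        | (rw [posQ_r, h.posQ_b] at hpos' <;> exact absurd hpos' (by decide))
        | (rw [h.posQ_a, posQ_r] at hpos' <;> exact absurd hpos' (by decide))
        | (rw [h.posQ_a, h.posQ_p] at hpos' <;> exact absurd hpos' (by decide))
        | (rw [h.posQ_a, h.posQ_b] at hpos' <;> exact absurd hpos' (by decide))
        | (rw [h.posQ_p, posQ_r] at hpos' <;> exact absurd hpos' (by decide))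
        | (rw [h.posQ_p, h.posQ_a] at hpos' <;> exact absurd hpos' (by decide))
        | (rw [h.posQ_p, h.posQ_b] at hpos' <;> exact absurd hpos' (by decide))
        | (rw [h.posQ_b, posQ_r] at hpos' <;> exact absurd hpos' (by decide))
        | (rw [h.posQ_b, h.posQ_a] at hpos' <;> exact absurd hpos' (by decide))
        | (rw [h.posQ_b, h.posQ_p] at hpos' <;> exact absurd hpos' (by decide))
  have hsurj : Function.Surjective φ := by
    rintro ⟨q, t⟩
    have hout : (⟦rep q⟧ : Quotient st) = q := Quotient.out_eq q
    have ht : ∀ s : ZMod 4, s = 0 ∨ s = 1 ∨ s = 2 ∨ s = 3 := by decide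
    have posr : ∀ x : Fin n, x ∈ quad a b p (rep q) → pos x = posQ a p (rep q) x := by
      intro x hx
      show posQ a p (rep ⟦x⟧) x = _
      rw [hmk x (rep q) hx, hout]
    rcases ht t with rfl | rfl | rfl | rfl
    · refine ⟨rep q, Prod.ext hout ?_⟩
      show pos (rep q) = 0
      rw [posr _ ((mem_quad_iff _ _).2 (Or.inl rfl)), posQ_r]
    · refine ⟨a (rep q), Prod.ext ?_ ?_⟩
      · show (⟦a (rep q)⟧ : Quotient st) = q
        rw [hmk _ (rep q) ((mem_quad_iff _ _).2 (Or.inr (Or.inl rfl))), hout]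
      · show pos (a (rep q)) = 1
        rw [posr _ ((mem_quad_iff _ _).2 (Or.inr (Or.inl rfl))), h.posQ_a]
    · refine ⟨p (rep q), Prod.ext ?_ ?_⟩
      · show (⟦p (rep q)⟧ : Quotient st) = q
        rw [hmk _ (rep q) ((mem_quad_iff _ _).2 (Or.inr (Or.inr (Or.inl rfl)))), hout]
      · show pos (p (rep q)) = 2
        rw [posr _ ((mem_quad_iff _ _).2 (Or.inr (Or.inr (Or.inl rfl)))), h.posQ_p]
    · refine ⟨b (rep q), Prod.ext ?_ ?_⟩
      · show (⟦b (rep q)⟧ : Quotient st) = q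
        rw [hmk _ (rep q) ((mem_quad_iff _ _).2 (Or.inr (Or.inr (Or.inr rfl)))), hout]
      · show pos (b (rep q)) = 3
        rw [posr _ ((mem_quad_iff _ _).2 (Or.inr (Or.inr (Or.inr rfl)))), h.posQ_b]
  -- the adjacency characterization
  have keyG : ∀ u v : Fin n, G.Adj u v ↔
      ((⟦u⟧ : Quotient st) = ⟦v⟧ ∧ (pos u = pos v + 1 ∨ pos v = pos u + 1)) := by
    intro u v
    constructor
    · intro hadj
      have hvq : v ∈ quad a b p u := by
        rw [mem_quad_iff]
        rcases (h.adj_iff u v).1 hadj with h' | h'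
        · exact Or.inr (Or.inl h')
        · exact Or.inr (Or.inr (Or.inr h'))
      have hQ : (⟦u⟧ : Quotient st) = ⟦v⟧ := (hmk v u hvq).symm
      have hu := hmemout u
      have hv : v ∈ quad a b p (rep ⟦u⟧) := by rw [hQ]; exact hmemout v
      refine ⟨hQ, ?_⟩
      have hposv : pos v = posQ a p (rep ⟦u⟧) v := by
        show posQ a p (rep ⟦v⟧) v = _; rw [hQ]
      rw [hposv]
      exact (h.adj_quad _ u v hu hv).1 hadj
    · rintro ⟨hQ, hrel⟩
      have hu := hmemout u
      have hv : v ∈ quad a b p (rep ⟦u⟧) := by rw [hQ]; exact hmemout v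
      have hposv : pos v = posQ a p (rep ⟦u⟧) v := by
        show posQ a p (rep ⟦v⟧) v = _; rw [hQ]
      rw [hposv] at hrel
      exact (h.adj_quad _ u v hu hv).2 hrel
  let E : Fin n ≃ Fin k × ZMod 4 :=
    (Equiv.ofBijective φ ⟨hinj, hsurj⟩).trans
      ((Fintype.equivFin (Quotient st)).prodCongr (Equiv.refl (ZMod 4)))
  have hcard : n = 4 * k := by
    have := Fintype.card_congr E
    simpa [mul_comm] using this
  refine ⟨k, hcard, ⟨⟨E, ?_⟩⟩⟩
  intro u v
  show (cycleUnion k).Adj (E u) (E v) ↔ G.Adj u v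
  have goal2 : ((Fintype.equivFin (Quotient st)) ⟦u⟧ = (Fintype.equivFin (Quotient st)) ⟦v⟧
      ∧ (pos u = pos v + 1 ∨ pos v = pos u + 1)) ↔ G.Adj u v := by
    rw [keyG u v]
    exact and_congr_left' (EmbeddingLike.apply_eq_iff_eq _)
  exact goal2

end QuadSetup
end PosQ

-- eigenvalue lemmas
lemma eig_of_two_smul_one {m : Type*} [Fintype m] [DecidableEq m] {A : Matrix m m ℝ}
    (hA : A.IsHermitian) (h : A = (2:ℝ) • 1) (i : m) : hA.eigenvalues i = 2 := by
  have hst := hA.spectral_theorem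
  have this : Matrix.diagonal (RCLike.ofReal ∘ hA.eigenvalues) = ((2:ℝ) • 1 : Matrix m m ℝ) := by
    have h3 := congrArg (Unitary.conjStarAlgAut ℝ (Matrix m m ℝ) hA.eigenvectorUnitary).symm hst
    rw [StarAlgEquiv.symm_apply_apply] at h3
    rw [← h3]
    exact (congrArg _ h).trans (by rw [map_smul, map_one])
  have := congrFun (congrFun this i) i
  simpa using this

lemma two_smul_one_of_eig {m : Type*} [Fintype m] [DecidableEq m] {A : Matrix m m ℝ}
    (hA : A.IsHermitian) (h : ∀ i, hA.eigenvalues i = 2) : A = (2:ℝ) • 1 := by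
  have hst := hA.spectral_theorem
  have hd : Matrix.diagonal (RCLike.ofReal ∘ hA.eigenvalues) = ((2:ℝ) • 1 : Matrix m m ℝ) := by
    ext i j
    by_cases hij : i = j <;> simp [Matrix.diagonal, hij, h]
  rw [hd] at hst
  rw [hst, map_smul, map_one]

lemma skewEnergy_of_two_smul_one {m : Type*} [Fintype m] [DecidableEq m] {S : Matrix m m ℝ}
    (h : Sᵀ * S = (2:ℝ) • 1) : skewEnergy S = (Fintype.card m) * Real.sqrt 2 := by
  unfold skewEnergy
  rw [Finset.sum_congr rfl fun i _ => by
    rw [eig_of_two_smul_one (show (Sᵀ * S).IsHermitian by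
        simpa using Matrix.isHermitian_conjTranspose_mul_self S) h i]]
  simp [Finset.card_univ, mul_comm]

-- the weight matrix on C4
def wZ : ZMod 4 → ZMod 4 → ℤ := fun i j =>
  if j = i + 1 then (if i = 3 then -1 else 1)
  else if i = j + 1 then (if j = 3 then 1 else -1) else 0

lemma wZ_skew : ∀ i j, wZ j i = - wZ i j := by decide
lemma wZ_sum : ∀ i j, (∑ k, wZ k i * wZ k j) = if i = j then 2 else 0 := by decide
lemma wZ_edge : ∀ i j : ZMod 4, (i = j + 1 ∨ j = i + 1) → (wZ i j = 1 ∨ wZ i j = -1) := by decide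
lemma wZ_nonedge : ∀ i j : ZMod 4, ¬(i = j + 1 ∨ j = i + 1) → wZ i j = 0 := by decide

lemma backward {n k : ℕ} (G : SimpleGraph (Fin n)) [DecidableRel G.Adj]
    (iso : G ≃g cycleUnion k) :
    ∃ S, IsSkewAdj G S ∧ skewEnergy S = n * Real.sqrt 2 := by
  classical
  let e := iso.toEquiv
  set S : Matrix (Fin n) (Fin n) ℝ :=
    fun u v => if (e u).1 = (e v).1 then ((wZ (e u).2 (e v).2 : ℤ) : ℝ) else 0 with hS
  have hadj : ∀ u v, G.Adj u v ↔ ((e u).1 = (e v).1 ∧ ((e u).2 = (e v).2 + 1 ∨ (e v).2 = (e u).2 + 1)) := by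
    intro u v
    rw [← iso.map_rel_iff]
    rfl
  refine ⟨S, ⟨?_, ?_⟩, ?_⟩
  · ext u v
    rw [Matrix.transpose_apply, Matrix.neg_apply]
    simp only [hS]
    by_cases hc : (e u).1 = (e v).1
    · rw [if_pos hc.symm, if_pos hc, wZ_skew]
      push_cast; ring
    · rw [if_neg (fun hcc => hc hcc.symm), if_neg hc, neg_zero]
  · intro u v
    constructor
    · intro hadj'
      rw [hadj] at hadj'
      simp only [hS, if_pos hadj'.1]
      rcases wZ_edge _ _ hadj'.2 with h' | h' <;> rw [h'] <;> norm_num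
    · intro hnadj
      rw [hadj] at hnadj
      simp only [hS]
      by_cases hc : (e u).1 = (e v).1
      · rw [if_pos hc, wZ_nonedge _ _ (fun hr => hnadj ⟨hc, hr⟩)]
        norm_num
      · rw [if_neg hc]
  · have key : Sᵀ * S = (2:ℝ) • 1 := by
      ext u v
      rw [Matrix.mul_apply]
      simp only [Matrix.transpose_apply]
      have hcomp := Equiv.sum_comp e.symm (fun x => S x u * S x v)
      rw [← hcomp]
      have hterm : ∀ y : Fin k × ZMod 4, S (e.symm y) u * S (e.symm y) v =
          (if y.1 = (e u).1 then ((wZ y.2 (e u).2 : ℤ) : ℝ) else 0) *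
          (if y.1 = (e v).1 then ((wZ y.2 (e v).2 : ℤ) : ℝ) else 0) := by
        intro y
        simp only [hS, Equiv.apply_symm_apply]
      rw [Finset.sum_congr rfl fun y _ => hterm y, Fintype.sum_prod_type]
      have hRHS : ((2:ℝ) • (1 : Matrix (Fin n) (Fin n) ℝ)) u v
          = if u = v then 2 else 0 := by
        by_cases huv : u = v <;> simp [Matrix.one_apply, huv]
      rw [hRHS]
      by_cases hc : (e u).1 = (e v).1
      · have hinner : ∀ c : Fin k, (∑ t : ZMod 4,
            (if c = (e u).1 then ((wZ t (e u).2 : ℤ) : ℝ) else 0) *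
            (if c = (e v).1 then ((wZ t (e v).2 : ℤ) : ℝ) else 0)) =
            if c = (e u).1 then ((∑ t, wZ t (e u).2 * wZ t (e v).2 : ℤ) : ℝ) else 0 := by
          intro c
          by_cases hcu : c = (e u).1
          · rw [if_pos hcu]
            push_cast
            refine Finset.sum_congr rfl fun t _ => ?_
            rw [if_pos hcu, if_pos (hcu.trans hc)]
          · rw [if_neg hcu]
            refine Finset.sum_eq_zero fun t _ => ?_
            rw [if_neg hcu, zero_mul]
        rw [Finset.sum_congr rfl fun c _ => hinner c]
        simp only [Finset.sum_ite_eq', Finset.mem_univ, if_true]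
        rw [wZ_sum]
        have huv_iff : u = v ↔ (e u).2 = (e v).2 := by
          constructor
          · rintro rfl; rfl
          · intro h2
            apply e.injective
            exact Prod.ext hc h2
        by_cases h2 : (e u).2 = (e v).2
        · rw [if_pos h2, if_pos (huv_iff.2 h2)]; norm_num
        · rw [if_neg h2, if_neg (fun hh => h2 (huv_iff.1 hh))]; norm_num
      · have hz : ∀ c : Fin k, ∀ t : ZMod 4,
            (if c = (e u).1 then ((wZ t (e u).2 : ℤ) : ℝ) else 0) *
            (if c = (e v).1 then ((wZ t (e v).2 : ℤ) : ℝ) else 0) = 0 := by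
          intro c t
          by_cases hcu : c = (e u).1
          · rw [if_neg (fun hcv => hc (hcu.symm.trans hcv)), mul_zero]
          · rw [if_neg hcu, zero_mul]
        rw [Finset.sum_congr rfl fun c _ => Finset.sum_congr rfl fun t _ => hz c t]
        simp only [Finset.sum_const_zero]
        rw [if_neg (fun huv : u = v => hc (by rw [huv]))]
    have := skewEnergy_of_two_smul_one key
    simpa using this

lemma forward_two_smul {n : ℕ} (G : SimpleGraph (Fin n)) [DecidableRel G.Adj]
    (hreg : G.IsRegularOfDegree 2) (S : Matrix (Fin n) (Fin n) ℝ)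
    (hent : ∀ i j, (G.Adj i j → (S i j = 1 ∨ S i j = -1)) ∧ (¬ G.Adj i j → S i j = 0))
    (hE : skewEnergy S = n * Real.sqrt 2) : Sᵀ * S = (2:ℝ) • 1 := by
  classical
  have hconj : Sᴴ = Sᵀ := Matrix.conjTranspose_eq_transpose_of_trivial S
  set hH := Matrix.isHermitian_conjTranspose_mul_self S with hHdef
  set lam := hH.eigenvalues with hlam
  -- nonnegativity
  have hpsd : (Sᴴ * S).PosSemidef := Matrix.posSemidef_conjTranspose_mul_self S
  have hnn : ∀ i, 0 ≤ lam i := fun i => hpsd.eigenvalues_nonneg i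
  -- trace
  have htr : ∑ i, lam i = 2 * n := by
    have h1 : ∑ i, lam i = (Sᴴ * S).trace := by
      rw [hH.spectral_theorem, Unitary.conjStarAlgAut_apply]
      rw [Matrix.trace_mul_comm, ← mul_assoc,
        Matrix.mem_unitaryGroup_iff'.mp hH.eigenvectorUnitary.2, one_mul]
      simp [Matrix.trace, Matrix.diagonal]
      rfl
    have hdiag : ∀ i, (Sᴴ * S) i i = 2 := by
      intro i
      rw [Matrix.mul_apply]
      simp only [Matrix.conjTranspose_apply, star_trivial]
      have hterm : ∀ k, S k i * S k i = if G.Adj i k then 1 else 0 := by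
        intro k
        by_cases hadj : G.Adj k i
        · rw [if_pos hadj.symm]
          rcases (hent k i).1 hadj with h' | h' <;> rw [h'] <;> norm_num
        · rw [if_neg (fun h' => hadj h'.symm), (hent k i).2 hadj, mul_zero]
      rw [Finset.sum_congr rfl fun k _ => hterm k, Finset.sum_boole]
      rw [show Finset.filter (fun k => G.Adj i k) Finset.univ = G.neighborFinset i from
        (SimpleGraph.neighborFinset_eq_filter G).symm]
      have hdeg : (G.neighborFinset i).card = 2 := hreg i
      rw [hdeg]
      norm_num
    rw [h1, Matrix.trace]
    rw [Finset.sum_congr rfl fun i _ => by rw [Matrix.diag_apply, hdiag i]]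
    simp [mul_comm]
  -- pointwise inequality
  have sqrt2_pos : (0:ℝ) < Real.sqrt 2 := Real.sqrt_pos.2 (by norm_num)
  have hsq2 : Real.sqrt 2 * Real.sqrt 2 = 2 := Real.mul_self_sqrt (by norm_num)
  have hle : ∀ i ∈ Finset.univ, Real.sqrt (lam i) ≤ (lam i + 2) / (2 * Real.sqrt 2) := by
    intro i _
    rw [le_div_iff₀ (by positivity)]
    have hs : Real.sqrt (lam i) * Real.sqrt (lam i) = lam i := Real.mul_self_sqrt (hnn i)
    nlinarith [sq_nonneg (Real.sqrt (lam i) - Real.sqrt 2), Real.sqrt_nonneg (lam i)]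
  -- sum of RHS equals the energy
  have hsumRHS : ∑ i, (lam i + 2) / (2 * Real.sqrt 2) = n * Real.sqrt 2 := by
    rw [← Finset.sum_div, Finset.sum_add_distrib, htr]
    simp only [Finset.sum_const, Finset.card_univ, Fintype.card_fin, nsmul_eq_mul]
    field_simp
    nlinarith [hsq2]
  have heq : ∀ i ∈ Finset.univ, Real.sqrt (lam i) = (lam i + 2) / (2 * Real.sqrt 2) := by
    rw [← Finset.sum_eq_sum_iff_of_le hle, hsumRHS]
    exact hE
  -- conclude each eigenvalue is 2
  have hall : ∀ i, lam i = 2 := by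
    intro i
    have h' := heq i (Finset.mem_univ i)
    rw [eq_div_iff (by positivity)] at h'
    have hs : Real.sqrt (lam i) * Real.sqrt (lam i) = lam i := Real.mul_self_sqrt (hnn i)
    have hzero : (Real.sqrt (lam i) - Real.sqrt 2) ^ 2 = 0 := by nlinarith
    have : Real.sqrt (lam i) = Real.sqrt 2 := by
      have := pow_eq_zero_iff (n := 2) (by norm_num) |>.1 hzero
      linarith [sub_eq_zero.1 this]
    nlinarith
  rw [← hconj]
  exact two_smul_one_of_eig hH hall

theorem two_regular_optimum {n : ℕ} (G : SimpleGraph (Fin n))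
    [DecidableRel G.Adj] (hreg : G.IsRegularOfDegree 2) :
    (∃ S, IsSkewAdj G S ∧ skewEnergy S = n * Real.sqrt 2) ↔
      ∃ k, n = 4 * k ∧ Nonempty (G ≃g cycleUnion k) := by
  constructor
  · rintro ⟨S, ⟨hskew, hent⟩, hE⟩
    have h2 : Sᵀ * S = (2:ℝ) • 1 := forward_two_smul G hreg S hent hE
    have hM : ∀ i j : Fin n, i ≠ j → ∑ k, S k i * S k j = 0 := by
      intro i j hij
      have := congrFun (congrFun h2 i) j
      rw [Matrix.mul_apply] at this
      simp only [Matrix.transpose_apply] at this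
      rw [this, Matrix.smul_apply, Matrix.one_apply_ne hij, smul_zero]
    have hab : ∀ v, ∃ x y, x ≠ y ∧ G.neighborFinset v = {x, y} := by
      intro v
      exact Finset.card_eq_two.mp (hreg v)
    choose a b Hne H2 using hab
    have hadj_a : ∀ v, G.Adj v (a v) := by
      intro v
      rw [← SimpleGraph.mem_neighborFinset, H2 v]
      simp
    have hadj_b : ∀ v, G.Adj v (b v) := by
      intro v
      rw [← SimpleGraph.mem_neighborFinset, H2 v]
      simp
    have hp : ∀ v, ∃ w, w ≠ v ∧ G.Adj (a v) w ∧ G.Adj (b v) w := by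
      intro v
      by_contra hcon
      push_neg at hcon
      have hsum := hM (a v) (b v) (Hne v)
      have hsingle : ∑ k, S k (a v) * S k (b v) = S v (a v) * S v (b v) := by
        apply Finset.sum_eq_single_of_mem v (Finset.mem_univ v)
        intro k _ hk
        by_cases h1 : G.Adj (a v) k
        · have h2' : ¬ G.Adj (b v) k := hcon k hk h1
          rw [(hent k (b v)).2 (fun h' => h2' h'.symm), mul_zero]
        · rw [(hent k (a v)).2 (fun h' => h1 h'.symm), zero_mul]
      rw [hsingle] at hsum
      rcases (hent v (a v)).1 (hadj_a v) with h' | h' <;>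
        rcases (hent v (b v)).1 (hadj_b v) with h'' | h'' <;>
          rw [h', h''] at hsum <;> norm_num at hsum
    choose p Hp1 Hp2 Hp3 using hp
    exact (QuadSetup.mk Hne H2 Hp2 Hp3 Hp1).conclusion
  · rintro ⟨k, hn, ⟨iso⟩⟩
    exact backward G iso
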